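/- arXiv:2106.09099 — 3 statements merged into one kernel-verified Lean document; each statement's English description precedes it below -/
import Mathlib

section
/- Let 0 < c₁ < c₂ < A and ζ = (c₂ - c₁)/(A - c₁). Given real numbers a₁, …, a_{N₀} with aⱼ ≤ A for each 1 ≤ j ≤ N₀ and ∑_{j=1}^{N₀} aⱼ ≥ c₂·N₀, there exist an integer l > ζ·N₀ and indices 1 ≤ n₁ < n₂ < ⋯ < n_l ≤ N₀ such that ∑_{j=n+1}^{nᵢ} aⱼ ≥ c₁·(nᵢ − n) for every 0 ≤ n < nᵢ and every i = 1, …, l. -/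
/-- **Pliss Lemma.** -/
theorem pliss_lemma (A c₁ c₂ : ℝ) (hc₁ : 0 < c₁) (h₁₂ : c₁ < c₂) (h₂A : c₂ < A)
    (N₀ : ℕ) (hN₀ : 1 ≤ N₀) (a : ℕ → ℝ)
    (hbd : ∀ j, 1 ≤ j → j ≤ N₀ → a j ≤ A)
    (hsum : c₂ * N₀ ≤ ∑ j ∈ Finset.Icc 1 N₀, a j) :
    ∃ (l : ℕ) (nseq : ℕ → ℕ),
      ((c₂ - c₁) / (A - c₁)) * N₀ < (l : ℝ) ∧
      (∀ i, 1 ≤ i → i ≤ l → 1 ≤ nseq i ∧ nseq i ≤ N₀) ∧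
      (∀ i j, 1 ≤ i → i < j → j ≤ l → nseq i < nseq j) ∧
      (∀ i, 1 ≤ i → i ≤ l → ∀ n, n < nseq i →
        c₁ * ((nseq i : ℝ) - n) ≤ ∑ j ∈ Finset.Icc (n + 1) (nseq i), a j) := by
  classical
  have hA₁ : (0:ℝ) < A - c₁ := by linarith
  -- partial sums of a j - c₁
  set S : ℕ → ℝ := fun n => ∑ j ∈ Finset.Ioc 0 n, (a j - c₁) with hSdef
  set P : ℕ → Prop := fun m => ∀ n, n < m → S n ≤ S m with hPdef
  set c : ℕ → ℕ := fun N => ((Finset.Icc 1 N).filter P).card with hcdef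
  have hSstep : ∀ N : ℕ, S (N + 1) = S N + (a (N + 1) - c₁) := by
    intro N
    simp only [hSdef]
    rw [Finset.sum_Ioc_succ_top (Nat.zero_le N)]
  have hS0 : S 0 = 0 := by simp [hSdef]
  have hcle : ∀ N, c N ≤ N := by
    intro N
    calc c N ≤ (Finset.Icc 1 N).card := Finset.card_filter_le _ _
    _ = N := by rw [Nat.card_Icc]; omega
  have hcsucc : ∀ N, c (N + 1) = if P (N + 1) then c N + 1 else c N := by
    intro N
    have hins : Finset.Icc 1 (N + 1) = insert (N + 1) (Finset.Icc 1 N) := by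
      ext x
      simp only [Finset.mem_Icc, Finset.mem_insert]
      omega
    simp only [hcdef]
    rw [hins, Finset.filter_insert]
    split
    · rw [Finset.card_insert_of_notMem]
      intro hmem
      have := Finset.mem_of_mem_filter _ hmem
      simp only [Finset.mem_Icc] at this
      omega
    · rfl
  have main : ∀ N, N ≤ N₀ →
      (∀ n, n ≤ N → S n ≤ (A - c₁) * c N) ∧ (c N < N → S N < (A - c₁) * c N) := by
    intro N
    induction N with
    | zero =>
      intro _
      refine ⟨?_, by omega⟩
      intro n hn
      interval_cases n
      simp [hS0, hcdef]
    | succ N ih =>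
      intro hN1
      obtain ⟨IH1, IH2⟩ := ih (by omega)
      have hbN : a (N + 1) - c₁ ≤ A - c₁ := by
        have := hbd (N + 1) (by omega) (by omega)
        linarith
      by_cases hp : P (N + 1)
      · have hcc : c (N + 1) = c N + 1 := by rw [hcsucc, if_pos hp]
        constructor
        · intro n hn
          rcases Nat.lt_succ_iff_lt_or_eq.mp (Nat.lt_succ_of_le hn) with h | h
          · have := IH1 n (by omega)
            rw [hcc]
            push_cast
            nlinarith
          · subst h
            have h1 := IH1 N le_rfl
            rw [hcc, hSstep]
            push_cast
            nlinarith
        · intro hlt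
          rw [hcc] at hlt ⊢
          have h2 := IH2 (by omega)
          rw [hSstep]
          push_cast
          nlinarith
      · have hcc : c (N + 1) = c N := by rw [hcsucc, if_neg hp]
        have hstrict : S (N + 1) < (A - c₁) * c N := by
          simp only [hPdef] at hp
          push_neg at hp
          obtain ⟨n, hn1, hn2⟩ := hp
          have := IH1 n (by omega)
          linarith
        refine ⟨?_, fun _ => by rw [hcc]; exact hstrict⟩
        intro n hn
        rcases Nat.lt_succ_iff_lt_or_eq.mp (Nat.lt_succ_of_le hn) with h | h
        · rw [hcc]; exact IH1 n (by omega)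
        · subst h; rw [hcc]; exact le_of_lt hstrict
  -- the set of hyperbolic times
  set H : Finset ℕ := (Finset.Icc 1 N₀).filter P with hHdef
  set l : ℕ := c N₀ with hldef
  have hl : H.card = l := rfl
  have hSN₀ : (c₂ - c₁) * N₀ ≤ S N₀ := by
    have hIoc : Finset.Ioc 0 N₀ = Finset.Icc 1 N₀ := by
      ext x; simp only [Finset.mem_Ioc, Finset.mem_Icc]; omega
    have : S N₀ = (∑ j ∈ Finset.Icc 1 N₀, a j) - c₁ * N₀ := by
      simp only [hSdef, hIoc, Finset.sum_sub_distrib, Finset.sum_const, Nat.card_Icc,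
        nsmul_eq_mul]
      rw [show N₀ + 1 - 1 = N₀ from by omega]
      ring
    linarith
  -- the counting estimate
  have hcount : ((c₂ - c₁) / (A - c₁)) * N₀ < (l : ℝ) := by
    obtain ⟨Q, R⟩ := main N₀ le_rfl
    rcases lt_or_eq_of_le (hcle N₀) with hlt | heq
    · have := R hlt
      rw [div_mul_eq_mul_div, div_lt_iff₀ hA₁]
      nlinarith
    · rw [hldef, heq]
      have hz : (c₂ - c₁) / (A - c₁) < 1 := by
        rw [div_lt_one hA₁]; linarith
      have hN₀pos : (0:ℝ) < N₀ := by exact_mod_cast hN₀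
      nlinarith
  -- the sequence of hyperbolic times
  set nseq : ℕ → ℕ := fun i => if h : i - 1 < l then H.orderEmbOfFin hl ⟨i - 1, h⟩ else 0
    with hnseqdef
  have hmem : ∀ i, 1 ≤ i → i ≤ l → nseq i ∈ H := by
    intro i h1 h2
    have h : i - 1 < l := by omega
    simp only [hnseqdef, dif_pos h]
    exact Finset.orderEmbOfFin_mem H hl _
  refine ⟨l, nseq, hcount, ?_, ?_, ?_⟩
  · intro i h1 h2
    have := hmem i h1 h2
    rw [hHdef, Finset.mem_filter, Finset.mem_Icc] at this
    exact ⟨this.1.1, this.1.2⟩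
  · intro i j h1 hij h2
    have hi : i - 1 < l := by omega
    have hj : j - 1 < l := by omega
    simp only [hnseqdef, dif_pos hi, dif_pos hj]
    exact (H.orderEmbOfFin hl).strictMono (by simp only [Fin.mk_lt_mk]; omega)
  · intro i h1 h2 n hn
    have hmemi := hmem i h1 h2
    rw [hHdef, Finset.mem_filter] at hmemi
    have hPm : P (nseq i) := hmemi.2
    have hSle : S n ≤ S (nseq i) := hPm n hn
    set m := nseq i with hm
    have hsplit : S n + ∑ j ∈ Finset.Ioc n m, (a j - c₁) = S m := by
      simp only [hSdef]
      exact Finset.sum_Ioc_consecutive _ (Nat.zero_le n) (le_of_lt hn)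
    have hIcc : Finset.Icc (n + 1) m = Finset.Ioc n m := by
      ext x; simp only [Finset.mem_Ioc, Finset.mem_Icc]; omega
    have hsum2 : ∑ j ∈ Finset.Ioc n m, (a j - c₁)
        = (∑ j ∈ Finset.Ioc n m, a j) - ((m : ℝ) - n) * c₁ := by
      rw [Finset.sum_sub_distrib, Finset.sum_const, Nat.card_Ioc, nsmul_eq_mul,
        Nat.cast_sub (le_of_lt hn)]
    rw [hIcc]
    nlinarith [hsplit, hsum2, hSle]
end

section
/- Let T : Ω → Ω preserve an ergodic probability μ and let n₁ : Ω → ℕ be measurable and μ-integrable. With n_{i+1}(ω) = n_i(ω) + n₁(T^{n_i(ω)}(ω)), for μ-almost every ω the sequence of times satisfies lim_{i→∞} (n_{i+1}(ω) − n_i(ω))/n_i(ω) = 0. -/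
open MeasureTheory Filter
open scoped ENNReal

lemma tsum_meas_lt_eq_lintegral {Ω : Type*} [MeasurableSpace Ω] (μ : Measure Ω)
    (g : Ω → ℕ) (hg : Measurable g) :
    ∑' m : ℕ, μ {ω | m < g ω} = ∫⁻ ω, (g ω : ℝ≥0∞) ∂μ := by
  have hmeas : ∀ m : ℕ, MeasurableSet {ω | m < g ω} := fun m =>
    hg (measurableSet_Ioi (a := m))
  calc ∑' m : ℕ, μ {ω | m < g ω}
      = ∑' m : ℕ, ∫⁻ ω, ({ω | m < g ω}).indicator (fun _ => (1 : ℝ≥0∞)) ω ∂μ := by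
        exact tsum_congr fun m => (lintegral_indicator_one (hmeas m)).symm
    _ = ∫⁻ ω, ∑' m : ℕ, ({ω | m < g ω}).indicator (fun _ => (1 : ℝ≥0∞)) ω ∂μ := by
        exact (lintegral_tsum fun m => (measurable_one.indicator (hmeas m)).aemeasurable).symm
    _ = ∫⁻ ω, (g ω : ℝ≥0∞) ∂μ := by
        congr 1; funext ω
        rw [tsum_eq_sum (s := Finset.range (g ω))
          (fun m hm => Set.indicator_of_notMem
            (by simpa using Finset.mem_range.not.mp hm) _)]
        have : ∀ m ∈ Finset.range (g ω),
            ({ω' | m < g ω'}).indicator (fun _ => (1 : ℝ≥0∞)) ω = 1 := fun m hm =>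
          Set.indicator_of_mem (by simpa using Finset.mem_range.mp hm) _
        rw [Finset.sum_congr rfl this]
        simp

/-- An integrable first-time function produces a nonlacunary (sublinear gap) sequence of
times along almost every orbit of an ergodic measure-preserving map. -/
theorem nonlacunary_of_integrable
    {Ω : Type*} [MeasurableSpace Ω] (μ : Measure Ω) [IsProbabilityMeasure μ]
    (T : Ω → Ω) (hT : MeasurePreserving T μ μ) (herg : Ergodic T μ)
    (n₁ : Ω → ℕ) (hmeas : Measurable n₁) (hpos : ∀ ω, 1 ≤ n₁ ω)
    (hint : Integrable (fun ω => (n₁ ω : ℝ)) μ)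
    (N : ℕ → Ω → ℕ)
    (hN0 : ∀ ω, N 0 ω = n₁ ω)
    (hNsucc : ∀ i ω, N (i + 1) ω = N i ω + n₁ (T^[N i ω] ω)) :
    ∀ᵐ ω ∂μ, Tendsto
      (fun i => ((N (i + 1) ω : ℝ) - (N i ω : ℝ)) / (N i ω : ℝ)) atTop (nhds 0) := by
  -- finiteness of the integral
  have hfin : ∫⁻ ω, (n₁ ω : ℝ≥0∞) ∂μ ≠ ∞ := by
    have h := hint.hasFiniteIntegral
    rw [HasFiniteIntegral] at h
    have : ∀ ω, (‖(n₁ ω : ℝ)‖₊ : ℝ≥0∞) = (n₁ ω : ℝ≥0∞) := by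
      intro ω; simp [Real.nnnorm_natCast]
    rw [lintegral_congr fun ω => (enorm_eq_nnnorm _).trans (this ω)] at h
    exact h.ne
  -- Borel–Cantelli for each K
  have bc : ∀ K : ℕ, ∀ᵐ ω ∂μ, ∀ᶠ m in atTop, (K + 1) * n₁ (T^[m] ω) ≤ m := by
    intro K
    have hsum : (∑' m : ℕ, μ {ω | m < (K + 1) * n₁ (T^[m] ω)}) ≠ ∞ := by
      have heq : ∀ m : ℕ, μ {ω | m < (K + 1) * n₁ (T^[m] ω)}
          = μ {ω | m < (K + 1) * n₁ ω} := by
        intro m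
        have : {ω | m < (K + 1) * n₁ (T^[m] ω)} = T^[m] ⁻¹' {ω | m < (K + 1) * n₁ ω} := rfl
        have hms : MeasurableSet {ω | m < (K + 1) * n₁ ω} :=
          measurableSet_lt measurable_const (measurable_const.mul hmeas)
        rw [this, (hT.iterate m).measure_preimage hms.nullMeasurableSet]
      rw [tsum_congr heq,
        tsum_meas_lt_eq_lintegral μ (fun ω => (K + 1) * n₁ ω) (measurable_const.mul hmeas)]
      have : ∀ ω, (((K + 1) * n₁ ω : ℕ) : ℝ≥0∞) = ((K : ℝ≥0∞) + 1) * (n₁ ω : ℝ≥0∞) := by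
        intro ω; push_cast; ring
      rw [lintegral_congr this, lintegral_const_mul _ (by fun_prop)]
      exact ENNReal.mul_ne_top (by simp) hfin
    have := ae_eventually_notMem hsum
    filter_upwards [this] with ω hω
    filter_upwards [hω] with m hm
    simpa [Set.mem_setOf_eq, not_lt] using hm
  have bc' : ∀ᵐ ω ∂μ, ∀ K : ℕ, ∀ᶠ m in atTop, (K + 1) * n₁ (T^[m] ω) ≤ m :=
    (ae_all_iff).mpr bc
  filter_upwards [bc'] with ω hω
  -- lower bound on N i ω
  have hNlb : ∀ i, i + 1 ≤ N i ω := by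
    intro i
    induction i with
    | zero => simpa [hN0] using hpos ω
    | succ i ih =>
      rw [hNsucc]
      have := hpos (T^[N i ω] ω)
      omega
  rw [Metric.tendsto_atTop]
  intro ε hε
  set K := ⌈1 / ε⌉₊ with hK
  obtain ⟨m₀, hm₀⟩ := (eventually_atTop).mp (hω K)
  refine ⟨m₀, fun i hi => ?_⟩
  set m := N i ω with hm
  have hmm₀ : m₀ ≤ m := le_trans (le_trans hi (Nat.le_succ i)) (hNlb i)
  have hle : (K + 1) * n₁ (T^[m] ω) ≤ m := hm₀ m hmm₀
  have hmpos : (0 : ℝ) < m := by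
    have h0 : 0 < m := lt_of_lt_of_le i.succ_pos (hNlb i)
    exact_mod_cast h0
  have hratio : ((N (i + 1) ω : ℝ) - (N i ω : ℝ)) / (N i ω : ℝ)
      = (n₁ (T^[m] ω) : ℝ) / m := by
    rw [hNsucc i ω]; push_cast; ring_nf; rfl
  rw [Real.dist_eq, sub_zero, hratio, abs_of_nonneg (by positivity)]
  have h1 : ((K : ℝ) + 1) * (n₁ (T^[m] ω) : ℝ) ≤ m := by exact_mod_cast hle
  have hK1 : (1 : ℝ) / ε < (K : ℝ) + 1 := by
    have := Nat.le_ceil (1 / ε)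
    linarith
  have hK1pos : (0 : ℝ) < (K : ℝ) + 1 := by positivity
  have step1 : (n₁ (T^[m] ω) : ℝ) / m ≤ 1 / ((K : ℝ) + 1) := by
    rw [div_le_div_iff₀ hmpos hK1pos]
    nlinarith
  have step2 : 1 / ((K : ℝ) + 1) < ε := by
    rw [div_lt_iff₀ hK1pos]
    rw [div_lt_iff₀ hε] at hK1
    nlinarith
  linarith
end

section
/- Let M be a compact metric space, f : M → M a continuous map with a transfer operator L(ψ)(x) = ∑_{y ∈ f^{−1}(x)} e^{φ(y)} ψ(y) for a continuous potential φ (with f a local homeomorphism of constant finite degree). If μ is a Borel probability measure with L*(μ) = λμ for some λ > 0, then the Jacobian of μ with respect to f equals λ·e^{−φ}, i.e., μ(f(A)) = ∫_A λ e^{−φ} dμ for every measurable A on which f is injective. -/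
open MeasureTheory
open scoped ENNReal NNReal

/-- The Jacobian of an eigenmeasure of the dual transfer operator associated with `(f, φ)`
and eigenvalue `λ` equals `λ e^{-φ}`. -/
theorem jacobian_of_conformal_measure
    {M : Type*} [MetricSpace M] [CompactSpace M] [MeasurableSpace M] [BorelSpace M]
    (f : M → M) (hf : Continuous f) (φ : M → ℝ) (hφ : Continuous φ)
    (hfin : ∀ x : M, (f ⁻¹' {x}).Finite)
    (d : ℕ) (hd : 1 ≤ d) (hdeg : ∀ x : M, (hfin x).toFinset.card = d)
    (hloc : ∀ x : M, ∃ U : Set M, IsOpen U ∧ x ∈ U ∧ Set.InjOn f U ∧ IsOpen (f '' U))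
    (μ : Measure M) [IsProbabilityMeasure μ]
    (lam : ℝ) (hlam : 0 < lam)
    (heigen : ∀ ψ : M → ℝ, Continuous ψ →
      ∫ x, (∑ y ∈ (hfin x).toFinset, Real.exp (φ y) * ψ y) ∂μ = lam * ∫ x, ψ x ∂μ) :
    ∀ A : Set M, MeasurableSet A → Set.InjOn f A →
      μ (f '' A) = ∫⁻ x in A, ENNReal.ofReal (lam * Real.exp (-φ x)) ∂μ := by
  classical
  -- `M` is nonempty since it carries a probability measure.
  haveI hne : Nonempty M := by
    by_contra h
    rw [not_nonempty_iff] at h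
    have h1 : μ Set.univ = 1 := measure_univ
    rw [Set.univ_eq_empty_iff.mpr h] at h1
    simp at h1
  -- a finite cover by open sets on which `f` is injective
  choose U hUopen hUmem hUinj _hUimg using hloc
  obtain ⟨t, ht⟩ : ∃ t : Finset M, Set.univ ⊆ ⋃ x ∈ t, U x :=
    isCompact_univ.elim_finite_subcover U hUopen
      (fun x _ => Set.mem_iUnion.2 ⟨x, hUmem x⟩)
  set n := t.card with hn
  set W : ℕ → Set M := fun k => if h : k < n then U ((t.equivFin.symm ⟨k, h⟩ : M)) else ∅
    with hW
  have hWmeas : ∀ k, MeasurableSet (W k) := by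
    intro k; rw [hW]; dsimp only; split
    · exact (hUopen _).measurableSet
    · exact MeasurableSet.empty
  have hWinj : ∀ k, Set.InjOn f (W k) := by
    intro k; rw [hW]; dsimp only; split
    · exact hUinj _
    · simp
  -- disjointify the cover
  set V : ℕ → Set M := disjointed W with hV
  have hVmeas : ∀ k, MeasurableSet (V k) := MeasurableSet.disjointed hWmeas
  have hVsub : ∀ k, V k ⊆ W k := disjointed_subset W
  have hVinj : ∀ k, Set.InjOn f (V k) := fun k => (hWinj k).mono (hVsub k)
  have hVdisj : Pairwise (Function.onFun Disjoint V) := disjoint_disjointed W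
  have hVempty : ∀ k, n ≤ k → V k = ∅ := by
    intro k hk
    refine Set.eq_empty_of_subset_empty ((hVsub k).trans ?_)
    rw [hW]; dsimp only; rw [dif_neg (by omega)]
  have hVcover : ∀ y : M, ∃ k, y ∈ V k := by
    intro y
    have hy : y ∈ ⋃ k, V k := by
      rw [hV, iUnion_disjointed]
      have h2 := ht (Set.mem_univ y)
      simp only [Set.mem_iUnion] at h2 ⊢
      obtain ⟨x, hx, hyx⟩ := h2
      refine ⟨(t.equivFin ⟨x, hx⟩ : Fin n), ?_⟩
      rw [hW]; dsimp only
      rw [dif_pos (t.equivFin ⟨x, hx⟩).isLt]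
      simpa using hyx
    exact Set.mem_iUnion.1 hy
  have hidx : ∀ y : M, ∃ k, k < n ∧ y ∈ V k ∧ ∀ j, y ∈ V j → j = k := by
    intro y
    obtain ⟨k, hk⟩ := hVcover y
    have hkn : k < n := by
      by_contra h
      rw [hVempty k (le_of_not_gt h)] at hk
      exact hk
    refine ⟨k, hkn, hk, fun j hj => ?_⟩
    by_contra hne'
    exact Set.disjoint_left.mp (hVdisj hne') hj hk
  choose idx hidxlt hidxmem hidxuniq using hidx
  -- the fiber sum decomposes along the pieces `V k`
  have claim1 : ∀ (g : M → ℝ≥0∞) (x : M),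
      ∑ y ∈ (hfin x).toFinset, g y
        = ∑ k ∈ Finset.range n,
            (if x ∈ f '' V k then g (Function.invFunOn f (V k) x) else 0) := by
    intro g x
    rw [← Finset.sum_fiberwise_of_maps_to (g := idx)
      (fun y _ => Finset.mem_range.2 (hidxlt y)) g]
    refine Finset.sum_congr rfl fun k _ => ?_
    have hfilter : ((hfin x).toFinset.filter fun y => idx y = k)
        = (hfin x).toFinset.filter (· ∈ V k) := by
      refine Finset.filter_congr fun y _ => ?_
      constructor
      · rintro rfl; exact hidxmem y
      · intro hy; exact (hidxuniq y k hy).symm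
    rw [hfilter]
    by_cases hx : x ∈ f '' V k
    · obtain ⟨a, haV, hax⟩ := hx
      have hset : (hfin x).toFinset.filter (· ∈ V k) = {a} := by
        ext b
        simp only [Finset.mem_filter, Set.Finite.mem_toFinset, Set.mem_preimage,
          Set.mem_singleton_iff, Finset.mem_singleton]
        constructor
        · rintro ⟨hbx, hbV⟩
          exact hVinj k hbV haV (by rw [hbx, hax])
        · rintro rfl
          exact ⟨hax, haV⟩
      rw [hset, Finset.sum_singleton, if_pos ⟨a, haV, hax⟩]
      congr 1
      rw [← hax]
      exact ((hVinj k).leftInvOn_invFunOn haV).symm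
    · rw [if_neg hx]
      have hset : (hfin x).toFinset.filter (· ∈ V k) = ∅ := by
        ext b
        simp only [Finset.mem_filter, Set.Finite.mem_toFinset, Set.mem_preimage,
          Set.mem_singleton_iff, Finset.notMem_empty, iff_false, not_and]
        intro hbx hbV
        exact hx ⟨b, hbV, hbx⟩
      rw [hset, Finset.sum_empty]
  have hVimg : ∀ k, MeasurableSet (f '' V k) := fun k =>
    (hVmeas k).image_of_continuousOn_injOn hf.continuousOn (hVinj k)
  -- measurability of the local inverse summands
  have hGmeas : ∀ (k : ℕ) (g : M → ℝ≥0∞), Measurable g →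
      Measurable (fun x => if x ∈ f '' V k then g (Function.invFunOn f (V k) x) else 0) := by
    intro k g hg s hs
    have key : (fun x => if x ∈ f '' V k then g (Function.invFunOn f (V k) x) else 0) ⁻¹' s
        = f '' (V k ∩ g ⁻¹' s) ∪ (if (0 : ℝ≥0∞) ∈ s then (f '' V k)ᶜ else ∅) := by
      ext x
      simp only [Set.mem_preimage, Set.mem_union]
      by_cases hx : x ∈ f '' V k
      · rw [if_pos hx]
        obtain ⟨a, haV, hax⟩ := hx
        have hinv : Function.invFunOn f (V k) x = a := by
          rw [← hax]; exact (hVinj k).leftInvOn_invFunOn haV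
        constructor
        · intro hgs
          exact Or.inl ⟨a, ⟨haV, by rwa [← hinv]⟩, hax⟩
        · rintro (⟨b, ⟨hbV, hbs⟩, hbx⟩ | hmem)
          · have hba : b = a := hVinj k hbV haV (by rw [hbx, hax])
            rw [hinv, ← hba]; exact hbs
          · exfalso
            split at hmem
            · exact hmem ⟨a, haV, hax⟩
            · exact hmem
      · rw [if_neg hx]
        constructor
        · intro h0
          refine Or.inr ?_
          split
          · exact hx
          · exact absurd h0 (by assumption)
        · rintro (⟨b, ⟨hbV, _⟩, hbx⟩ | hmem)
          · exact absurd ⟨b, hbV, hbx⟩ hx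
          · split at hmem
            · assumption
            · exact absurd hmem (Set.notMem_empty x)
    rw [key]
    refine (((hVmeas k).inter (hg hs)).image_of_continuousOn_injOn hf.continuousOn
      ((hVinj k).mono Set.inter_subset_left)).union ?_
    split
    · exact (hVimg k).compl
    · exact MeasurableSet.empty
  -- the weight
  set ρ : M → ℝ≥0∞ := fun y => ENNReal.ofReal (Real.exp (φ y)) with hρ
  have hρmeas : Measurable ρ :=
    ENNReal.measurable_ofReal.comp ((Real.continuous_exp.comp hφ).measurable)
  have hTmeas : ∀ ψ : M → ℝ≥0∞, Measurable ψ →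
      Measurable fun x => ∑ y ∈ (hfin x).toFinset, ρ y * ψ y := by
    intro ψ hψ
    have hrw : (fun x => ∑ y ∈ (hfin x).toFinset, ρ y * ψ y)
        = fun x => ∑ k ∈ Finset.range n,
            (if x ∈ f '' V k then (fun y => ρ y * ψ y) (Function.invFunOn f (V k) x) else 0) :=
      funext fun x => claim1 (fun y => ρ y * ψ y) x
    rw [hrw]
    exact Finset.measurable_sum _ fun k _ => hGmeas k _ (hρmeas.mul hψ)
  -- the measure representing the dual transfer operator
  set E : ∀ k : ℕ, ↥(V k) → M := fun k => (V k).restrict f with hE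
  have hEemb : ∀ k, MeasurableEmbedding (E k) := fun k =>
    ContinuousOn.measurableEmbedding (hVmeas k) hf.continuousOn (hVinj k)
  set m₁ : Measure M := Measure.sum (fun k : ℕ =>
      ((Measure.comap (E k) μ).map (Subtype.val)).withDensity ρ) with hm₁
  have step1 : ∀ ψ : M → ℝ≥0∞, Measurable ψ →
      ∫⁻ x, ψ x ∂m₁ = ∫⁻ x, ∑ y ∈ (hfin x).toFinset, ρ y * ψ y ∂μ := by
    intro ψ hψ
    have hterm : ∀ k : ℕ,
        ∫⁻ x, ψ x ∂(((Measure.comap (E k) μ).map (Subtype.val)).withDensity ρ)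
          = ∫⁻ x, (if x ∈ f '' V k then
              (fun y => ρ y * ψ y) (Function.invFunOn f (V k) x) else 0) ∂μ := by
      intro k
      rw [lintegral_withDensity_eq_lintegral_mul _ hρmeas hψ]
      rw [(MeasurableEmbedding.subtype_coe (hVmeas k)).lintegral_map]
      have hmapcomap : (Measure.comap (E k) μ).map (E k) = μ.restrict (Set.range (E k)) :=
        (hEemb k).map_comap μ
      have hrange : Set.range (E k) = f '' V k := Set.range_restrict f (V k)
      have h1 : ∫⁻ x, (if x ∈ f '' V k then
            (fun y => ρ y * ψ y) (Function.invFunOn f (V k) x) else 0) ∂(μ.restrict (f '' V k))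
          = ∫⁻ x, (if x ∈ f '' V k then
            (fun y => ρ y * ψ y) (Function.invFunOn f (V k) x) else 0) ∂μ := by
        rw [← lintegral_indicator (hVimg k)]
        refine lintegral_congr fun x => ?_
        rw [Set.indicator_apply]
        by_cases hx : x ∈ f '' V k
        · rw [if_pos hx, if_pos hx]
        · rw [if_neg hx, if_neg hx]
      rw [← h1, ← hrange, ← hmapcomap, (hEemb k).lintegral_map]
      refine lintegral_congr fun a => ?_
      have hfa : E k a ∈ Set.range (E k) := ⟨a, rfl⟩
      rw [if_pos hfa]
      have hEa : E k a = f (a : M) := rfl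
      have hinv : Function.invFunOn f (V k) (E k a) = (a : M) := by
        rw [hEa]; exact (hVinj k).leftInvOn_invFunOn a.2
      rw [hinv]
      rfl
    calc ∫⁻ x, ψ x ∂m₁
        = ∑' k : ℕ, ∫⁻ x, ψ x ∂(((Measure.comap (E k) μ).map (Subtype.val)).withDensity ρ) := by
          rw [hm₁, lintegral_sum_measure]
      _ = ∑' k : ℕ, ∫⁻ x, (if x ∈ f '' V k then
            (fun y => ρ y * ψ y) (Function.invFunOn f (V k) x) else 0) ∂μ := tsum_congr hterm
      _ = ∑ k ∈ Finset.range n, ∫⁻ x, (if x ∈ f '' V k then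
            (fun y => ρ y * ψ y) (Function.invFunOn f (V k) x) else 0) ∂μ := by
          refine tsum_eq_sum fun k hk => ?_
          have hVk : V k = ∅ := hVempty k (le_of_not_gt fun h => hk (Finset.mem_range.2 h))
          simp [hVk]
      _ = ∫⁻ x, ∑ k ∈ Finset.range n, (if x ∈ f '' V k then
            (fun y => ρ y * ψ y) (Function.invFunOn f (V k) x) else 0) ∂μ :=
          (lintegral_finset_sum _ fun k _ => hGmeas k _ (hρmeas.mul hψ)).symm
      _ = ∫⁻ x, ∑ y ∈ (hfin x).toFinset, ρ y * ψ y ∂μ :=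
          lintegral_congr fun x => (claim1 (fun y => ρ y * ψ y) x).symm
  -- an upper bound for the weight
  obtain ⟨C, hC⟩ : ∃ C : ℝ, ∀ y, φ y ≤ C := by
    obtain ⟨z, _, hz⟩ := isCompact_univ.exists_isMaxOn Set.univ_nonempty hφ.continuousOn
    exact ⟨φ z, fun y => hz (Set.mem_univ y)⟩
  haveI hm₁fin : IsFiniteMeasure m₁ := by
    constructor
    have h1 : ∫⁻ x, (1 : ℝ≥0∞) ∂m₁ = ∫⁻ x, ∑ y ∈ (hfin x).toFinset, ρ y * 1 ∂μ :=
      step1 (fun _ => 1) measurable_const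
    have h2 : m₁ Set.univ = ∫⁻ _, (1 : ℝ≥0∞) ∂m₁ := by simp
    rw [h2, h1]
    have hbound : ∀ x, ∑ y ∈ (hfin x).toFinset, ρ y * 1
        ≤ (d : ℝ≥0∞) * ENNReal.ofReal (Real.exp C) := by
      intro x
      calc ∑ y ∈ (hfin x).toFinset, ρ y * 1
          ≤ ∑ _y ∈ (hfin x).toFinset, ENNReal.ofReal (Real.exp C) := by
            refine Finset.sum_le_sum fun y _ => ?_
            rw [mul_one, hρ]
            exact ENNReal.ofReal_le_ofReal (Real.exp_le_exp.2 (hC y))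
        _ = ((hfin x).toFinset.card : ℝ≥0∞) * ENNReal.ofReal (Real.exp C) := by
            rw [Finset.sum_const, nsmul_eq_mul]
        _ = (d : ℝ≥0∞) * ENNReal.ofReal (Real.exp C) := by rw [hdeg x]
    calc ∫⁻ x, ∑ y ∈ (hfin x).toFinset, ρ y * 1 ∂μ
        ≤ ∫⁻ _x, (d : ℝ≥0∞) * ENNReal.ofReal (Real.exp C) ∂μ := lintegral_mono hbound
      _ = (d : ℝ≥0∞) * ENNReal.ofReal (Real.exp C) * μ Set.univ := lintegral_const _
      _ < ⊤ := by
          rw [measure_univ, mul_one]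
          exact ENNReal.mul_lt_top (ENNReal.natCast_lt_top d) ENNReal.ofReal_lt_top
  -- the eigenmeasure equation extends to all measurable functions: `m₁ = lam • μ`
  have hμsmul : m₁ = (ENNReal.ofReal lam) • μ := by
    apply ext_of_forall_lintegral_eq_of_IsFiniteMeasure
    intro g
    have hgc : Continuous fun x => (g x : ℝ) := NNReal.continuous_coe.comp g.continuous
    have hgmeas : Measurable fun x => ((g x : ℝ≥0) : ℝ≥0∞) := g.measurable_coe_ennreal_comp
    set F : M → ℝ := fun x => ∑ y ∈ (hfin x).toFinset, Real.exp (φ y) * (g y : ℝ) with hF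
    have hFnn : ∀ x, 0 ≤ F x := fun x =>
      Finset.sum_nonneg fun y _ => mul_nonneg (Real.exp_pos _).le (g y).2
    have hTF : ∀ x, ∑ y ∈ (hfin x).toFinset, ρ y * ((g y : ℝ≥0) : ℝ≥0∞)
        = ENNReal.ofReal (F x) := by
      intro x
      simp only [hF]
      rw [ENNReal.ofReal_sum_of_nonneg (s := (hfin x).toFinset)
        (f := fun y => Real.exp (φ y) * (g y : ℝ))
        (fun y _ => mul_nonneg (Real.exp_pos _).le (g y).2)]
      refine Finset.sum_congr rfl fun y _ => ?_
      rw [ENNReal.ofReal_mul (Real.exp_pos _).le, ENNReal.ofReal_coe_nnreal, hρ]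
    have hFmeas : Measurable F := by
      have hFr : F = fun x =>
          (∑ y ∈ (hfin x).toFinset, ρ y * ((g y : ℝ≥0) : ℝ≥0∞)).toReal := by
        funext x
        rw [hTF x, ENNReal.toReal_ofReal (hFnn x)]
      rw [hFr]
      exact (hTmeas _ hgmeas).ennreal_toReal
    obtain ⟨B, hB⟩ : ∃ B : ℝ, ∀ x, (g x : ℝ) ≤ B :=
      ⟨(nndist 0 g : ℝ≥0), fun x => NNReal.coe_le_coe.mpr (g.apply_le_nndist_zero x)⟩
    have hFbd : ∀ x, ‖F x‖ ≤ (d : ℝ) * (Real.exp C * B) := by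
      intro x
      rw [Real.norm_of_nonneg (hFnn x), hF]
      calc ∑ y ∈ (hfin x).toFinset, Real.exp (φ y) * (g y : ℝ)
          ≤ ∑ _y ∈ (hfin x).toFinset, Real.exp C * B := by
            refine Finset.sum_le_sum fun y _ => ?_
            exact mul_le_mul (Real.exp_le_exp.2 (hC y)) (hB y) (g y).2 (Real.exp_pos _).le
        _ = ((hfin x).toFinset.card : ℝ) * (Real.exp C * B) := by
            rw [Finset.sum_const, nsmul_eq_mul]
        _ = (d : ℝ) * (Real.exp C * B) := by rw [hdeg x]
    have hFint : Integrable F μ := by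
      refine Integrable.mono' (integrable_const ((d : ℝ) * (Real.exp C * B)))
        hFmeas.aestronglyMeasurable ?_
      exact Filter.Eventually.of_forall hFbd
    have hgint : Integrable (fun x => (g x : ℝ)) μ :=
      BoundedContinuousFunction.integrable_of_nnreal μ g
    calc ∫⁻ x, (g x : ℝ≥0∞) ∂m₁
        = ∫⁻ x, ∑ y ∈ (hfin x).toFinset, ρ y * ((g y : ℝ≥0) : ℝ≥0∞) ∂μ := step1 _ hgmeas
      _ = ∫⁻ x, ENNReal.ofReal (F x) ∂μ := lintegral_congr fun x => hTF x
      _ = ENNReal.ofReal (∫ x, F x ∂μ) :=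
          (ofReal_integral_eq_lintegral_ofReal hFint (Filter.Eventually.of_forall hFnn)).symm
      _ = ENNReal.ofReal (lam * ∫ x, (g x : ℝ) ∂μ) := by
          rw [hF]
          rw [heigen (fun x => (g x : ℝ)) hgc]
      _ = ENNReal.ofReal lam * ENNReal.ofReal (∫ x, (g x : ℝ) ∂μ) := ENNReal.ofReal_mul hlam.le
      _ = ENNReal.ofReal lam * ∫⁻ x, ENNReal.ofReal ((g x : ℝ)) ∂μ := by
          rw [ofReal_integral_eq_lintegral_ofReal hgint
            (Filter.Eventually.of_forall fun x => (g x).2)]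
      _ = ENNReal.ofReal lam * ∫⁻ x, (g x : ℝ≥0∞) ∂μ := by
          simp_rw [ENNReal.ofReal_coe_nnreal]
      _ = ∫⁻ x, (g x : ℝ≥0∞) ∂((ENNReal.ofReal lam) • μ) := by rw [lintegral_smul_measure, smul_eq_mul]
  -- conclusion
  intro A hA hinjA
  have hAimg : MeasurableSet (f '' A) :=
    hA.image_of_continuousOn_injOn hf.continuousOn hinjA
  set ψ₀ : M → ℝ≥0∞ := A.indicator (fun z => ENNReal.ofReal (Real.exp (-φ z))) with hψ₀
  have hψ₀meas : Measurable ψ₀ := by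
    refine Measurable.indicator ?_ hA
    have hc : Continuous fun x : M => Real.exp (-φ x) := Real.continuous_exp.comp hφ.neg
    exact hc.measurable.ennreal_ofReal
  have hTψ₀ : ∀ x, ∑ y ∈ (hfin x).toFinset, ρ y * ψ₀ y = (f '' A).indicator 1 x := by
    intro x
    have hterm : ∀ y ∈ (hfin x).toFinset, ρ y * ψ₀ y = if y ∈ A then 1 else 0 := by
      intro y _
      rw [hψ₀, Set.indicator_apply]
      by_cases hy : y ∈ A
      · rw [if_pos hy, if_pos hy, hρ]
        dsimp only
        rw [← ENNReal.ofReal_mul (Real.exp_pos _).le, ← Real.exp_add]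
        simp
      · rw [if_neg hy, if_neg hy, mul_zero]
    rw [Finset.sum_congr rfl hterm, Finset.sum_boole]
    by_cases hx : x ∈ f '' A
    · obtain ⟨a, haA, hax⟩ := hx
      have hset : ((hfin x).toFinset.filter (· ∈ A)) = {a} := by
        ext b
        simp only [Finset.mem_filter, Set.Finite.mem_toFinset, Set.mem_preimage,
          Set.mem_singleton_iff, Finset.mem_singleton]
        constructor
        · rintro ⟨hbx, hbA⟩
          exact hinjA hbA haA (by rw [hbx, hax])
        · rintro rfl
          exact ⟨hax, haA⟩
      rw [hset, Set.indicator_of_mem (show x ∈ f '' A from ⟨a, haA, hax⟩) (1 : M → ℝ≥0∞)]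
      simp
    · have hset : ((hfin x).toFinset.filter (· ∈ A)) = ∅ := by
        ext b
        simp only [Finset.mem_filter, Set.Finite.mem_toFinset, Set.mem_preimage,
          Set.mem_singleton_iff, Finset.notMem_empty, iff_false, not_and]
        intro hbx hbA
        exact hx ⟨b, hbA, hbx⟩
      rw [hset, Set.indicator_of_notMem hx]
      simp
  have e1 : ∫⁻ x, ∑ y ∈ (hfin x).toFinset, ρ y * ψ₀ y ∂μ = μ (f '' A) := by
    rw [show (fun x => ∑ y ∈ (hfin x).toFinset, ρ y * ψ₀ y)
        = (f '' A).indicator 1 from funext hTψ₀]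
    exact lintegral_indicator_one hAimg
  have e2 : ∫⁻ x, ψ₀ x ∂m₁ = ∫⁻ x, ∑ y ∈ (hfin x).toFinset, ρ y * ψ₀ y ∂μ :=
    step1 _ hψ₀meas
  have e3 : ∫⁻ x, ψ₀ x ∂m₁ = ENNReal.ofReal lam * ∫⁻ x, ψ₀ x ∂μ := by
    rw [hμsmul, lintegral_smul_measure, smul_eq_mul]
  have e4 : ∫⁻ x, ψ₀ x ∂μ = ∫⁻ x in A, ENNReal.ofReal (Real.exp (-φ x)) ∂μ := by
    rw [hψ₀]
    exact lintegral_indicator hA _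
  rw [← e1, ← e2, e3, e4]
  have hmeasneg : Measurable fun x : M => ENNReal.ofReal (Real.exp (-φ x)) := by
    have hc : Continuous fun x : M => Real.exp (-φ x) := Real.continuous_exp.comp hφ.neg
    exact hc.measurable.ennreal_ofReal
  rw [← lintegral_const_mul _ hmeasneg]
  refine lintegral_congr fun x => ?_
  rw [ENNReal.ofReal_mul hlam.le]
end
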